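/- Let G = (V, E⁺, E⁰) be a fuzzy graph in which all real edges and nonedges have unit weight, and let k be a nonnegative integer. Define a fuzzy graph G' with unit weights on real edges and nonedges as follows: the vertex set is V together with a new vertex x_e for every real edge e ∈ E⁺; for every real edge e = {u,v} ∈ E⁺ of G, the pairs {u, x_e} and {v, x_e} are real edges of G'; the nonedges of G' are exactly the nonedges of G; all remaining vertex pairs of G' (including every former real edge {u,v} of G and all other pairs involving the new vertices) are fuzzy edges. Then G admits a clustering of cost at most k if and only if G' admits a clustering of cost at most k. -/

import Mathlib

open Finset

/-- A fuzzy graph: a finite vertex set with disjoint symmetric irreflexive sets of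
'real' edges and 'fuzzy' edges; remaining pairs of distinct vertices are 'nonedges'. -/
structure FuzzyGraph (V : Type*) where
  real : V → V → Bool
  fuzzy : V → V → Bool
  real_symm : ∀ u v, real u v = real v u
  fuzzy_symm : ∀ u v, fuzzy u v = fuzzy v u
  real_irrefl : ∀ v, real v v = false
  fuzzy_irrefl : ∀ v, fuzzy v v = false
  not_real_and_fuzzy : ∀ u v, ¬(real u v = true ∧ fuzzy u v = true)

namespace FuzzyGraph

variable {V : Type*}

/-- The pair `{u,v}` is a nonedge: distinct, neither a real nor a fuzzy edge. -/
def nonedge (G : FuzzyGraph V) (u v : V) : Prop :=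
  u ≠ v ∧ ¬G.real u v ∧ ¬G.fuzzy u v

instance (G : FuzzyGraph V) [DecidableEq V] (u v : V) : Decidable (G.nonedge u v) :=
  inferInstanceAs (Decidable (u ≠ v ∧ ¬G.real u v ∧ ¬G.fuzzy u v))

/-- The simple graph `G⁽⁺⁾` of real edges. -/
def plus (G : FuzzyGraph V) : SimpleGraph V where
  Adj u v := G.real u v
  symm := ⟨by intro u v h; rwa [G.real_symm] at h⟩
  loopless := ⟨by intro v h; rw [G.real_irrefl] at h; exact Bool.noConfusion h⟩

/-- The simple graph `G⁽⁰⁾` of fuzzy edges. -/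
def zero (G : FuzzyGraph V) : SimpleGraph V where
  Adj u v := G.fuzzy u v
  symm := ⟨by intro u v h; rwa [G.fuzzy_symm] at h⟩
  loopless := ⟨by intro v h; rw [G.fuzzy_irrefl] at h; exact Bool.noConfusion h⟩

variable [Fintype V] [DecidableEq V]

/-- The real neighborhood `N⁺(v)`. -/
def realNbrs (G : FuzzyGraph V) (v : V) : Finset V := univ.filter fun u => G.real v u

/-- The fuzzy neighborhood `N⁰(v)`. -/
def fuzzyNbrs (G : FuzzyGraph V) (v : V) : Finset V := univ.filter fun u => G.fuzzy v u

/-- The nonneighborhood `N⁻(v)`. -/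
def nonNbrs (G : FuzzyGraph V) (v : V) : Finset V := univ.filter fun u => G.nonedge v u

/-- The closed real neighborhood `N⁺[v]`. -/
def closedRealNbrs (G : FuzzyGraph V) (v : V) : Finset V := insert v (G.realNbrs v)

end FuzzyGraph

/-- `ω` is a valid weight function for `G`: symmetric nonnegative integer weights,
zero exactly on the fuzzy edges. -/
def IsWeight {V : Type*} [Fintype V] [DecidableEq V] (G : FuzzyGraph V) (ω : V → V → ℕ) : Prop :=
  (∀ u v, ω u v = ω v u) ∧ ∀ u v : V, u ≠ v → (ω u v = 0 ↔ G.fuzzy u v)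

/-- The unit weight function: weight 1 on real edges and nonedges, 0 on fuzzy edges. -/
def unitW {V : Type*} (G : FuzzyGraph V) : V → V → ℕ := fun u v => if G.fuzzy u v then 0 else 1

/-- Two vertices lie in a common cluster of the clustering `𝒞`. -/
def together {V : Type*} [Fintype V] [DecidableEq V] (𝒞 : Finpartition (univ : Finset V))
    (u v : V) : Prop :=
  ∃ C ∈ 𝒞.parts, u ∈ C ∧ v ∈ C

instance {V : Type*} [Fintype V] [DecidableEq V] (𝒞 : Finpartition (univ : Finset V)) (u v : V) :
    Decidable (together 𝒞 u v) :=
  inferInstanceAs (Decidable (∃ C ∈ 𝒞.parts, u ∈ C ∧ v ∈ C))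

/-- The cost of a clustering: total weight of real edges between different clusters
plus total weight of nonedges inside clusters.  (Each unordered pair is counted twice
in the sum over ordered pairs, whence the division by 2.) -/
def cost {V : Type*} [Fintype V] [DecidableEq V] (G : FuzzyGraph V) (ω : V → V → ℕ)
    (𝒞 : Finpartition (univ : Finset V)) : ℕ :=
  (∑ p ∈ univ.offDiag,
      ((if G.real p.1 p.2 ∧ ¬together 𝒞 p.1 p.2 then ω p.1 p.2 else 0) +
       (if G.nonedge p.1 p.2 ∧ together 𝒞 p.1 p.2 then ω p.1 p.2 else 0))) / 2

/-- A clique in `G⁽⁺⁾`: pairwise real-adjacent vertices. -/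
def IsRealClique {V : Type*} (G : FuzzyGraph V) (K : Finset V) : Prop :=
  ∀ u ∈ K, ∀ v ∈ K, u ≠ v → G.real u v

/-- A clique in `G⁽⁰⁾`: pairwise fuzzy-adjacent vertices. -/
def IsFuzzyClique {V : Type*} (G : FuzzyGraph V) (K : Finset V) : Prop :=
  ∀ u ∈ K, ∀ v ∈ K, u ≠ v → G.fuzzy u v

/-- A critical clique of `G⁽⁺⁾`: a clique with `⋂_{x ∈ K} N⁺[x] = ⋃_{x ∈ K} N⁺[x]`,
inclusion-wise maximal with this property. -/
def IsCriticalClique {V : Type*} [Fintype V] [DecidableEq V] (G : FuzzyGraph V)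
    (K : Finset V) : Prop :=
  IsRealClique G K ∧ K.inf (G.closedRealNbrs) = K.sup (G.closedRealNbrs) ∧
    ∀ K' : Finset V, K ⊆ K' → IsRealClique G K' →
      K'.inf (G.closedRealNbrs) = K'.sup (G.closedRealNbrs) → K' = K

/-- A simple graph is `c`-closed if every pair of distinct nonadjacent vertices has
fewer than `c` common neighbors. -/
def IsCClosed {V : Type*} (H : SimpleGraph V) (c : ℕ) : Prop :=
  ∀ u v : V, u ≠ v → ¬H.Adj u v → Set.ncard {w | H.Adj u w ∧ H.Adj v w} < c

/-- A fuzzy graph is fuzzy `c`-closed if its fuzzy edge graph `G⁽⁰⁾` is `c`-closed. -/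
def FuzzyCClosed {V : Type*} [Fintype V] [DecidableEq V] (G : FuzzyGraph V) (c : ℕ) : Prop :=
  ∀ u v : V, u ≠ v → ¬G.fuzzy u v → ((G.fuzzyNbrs u) ∩ (G.fuzzyNbrs v)).card < c

/-- The unordered pair `e` is a real edge of `G`. -/
def realEdgeP {V : Type*} (G : FuzzyGraph V) (e : Sym2 V) : Prop :=
  Sym2.lift ⟨G.real, G.real_symm⟩ e = true

instance {V : Type*} (G : FuzzyGraph V) : DecidablePred (realEdgeP G) :=
  fun e => inferInstanceAs (Decidable (_ = true))

section Stmt16Aux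

variable {V : Type*} [Fintype V] [DecidableEq V]

private lemma together_iff_mem_part (P : Finpartition (univ : Finset V)) (u v : V) :
    together P u v ↔ v ∈ P.part u := by
  constructor
  · rintro ⟨C, hC, hu, hv⟩
    rwa [P.part_eq_of_mem hC hu]
  · intro h
    exact ⟨P.part u, P.part_mem.2 (mem_univ u), P.mem_part (mem_univ u), h⟩

private lemma together_refl (P : Finpartition (univ : Finset V)) (u : V) : together P u u :=
  ⟨P.part u, P.part_mem.2 (mem_univ u), P.mem_part (mem_univ u), P.mem_part (mem_univ u)⟩

private lemma together_symm {P : Finpartition (univ : Finset V)} {u v : V}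
    (h : together P u v) : together P v u := by
  obtain ⟨C, hC, hu, hv⟩ := h
  exact ⟨C, hC, hv, hu⟩

private lemma together_trans {P : Finpartition (univ : Finset V)} {u v w : V}
    (h : together P u v) (h' : together P v w) : together P u w := by
  obtain ⟨C, hC, hu, hv⟩ := h
  obtain ⟨D, hD, hv', hw⟩ := h'
  have : C = D := P.eq_of_mem_parts hC hD hv hv'
  exact ⟨C, hC, hu, this ▸ hw⟩

private lemma together_ofSetoid (s : Setoid V) [DecidableRel s.r] (u v : V) :
    together (Finpartition.ofSetoid s) u v ↔ s.r u v := by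
  rw [together_iff_mem_part, Finpartition.mem_part_ofSetoid_iff_rel]

private lemma sum_le_sum_inj {α β : Type*} [DecidableEq β] {A : Finset α} {B : Finset β}
    (f : α → ℕ) (g : β → ℕ) (i : α → β)
    (hmem : ∀ p ∈ A, f p ≠ 0 → i p ∈ B)
    (hle : ∀ p ∈ A, f p ≠ 0 → f p ≤ g (i p))
    (hinj : ∀ p ∈ A, f p ≠ 0 → ∀ q ∈ A, f q ≠ 0 → i p = i q → p = q) :
    ∑ p ∈ A, f p ≤ ∑ q ∈ B, g q := by
  classical
  rw [← Finset.sum_filter_ne_zero A]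
  have h2 : ∑ p ∈ A.filter (fun p => f p ≠ 0), f p
      ≤ ∑ p ∈ A.filter (fun p => f p ≠ 0), g (i p) := by
    refine Finset.sum_le_sum fun p hp => ?_
    rw [Finset.mem_filter] at hp
    exact hle p hp.1 hp.2
  refine h2.trans ?_
  have h3 : ∑ q ∈ (A.filter (fun p => f p ≠ 0)).image i, g q
      = ∑ p ∈ A.filter (fun p => f p ≠ 0), g (i p) := by
    refine Finset.sum_image ?_
    intro p hp q hq hpq
    rw [Finset.mem_coe, Finset.mem_filter] at hp hq
    exact hinj p hp.1 hp.2 q hq.1 hq.2 hpq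
  rw [← h3]
  refine Finset.sum_le_sum_of_subset ?_
  intro q hq
  rw [Finset.mem_image] at hq
  obtain ⟨p, hp, rfl⟩ := hq
  rw [Finset.mem_filter] at hp
  exact hmem p hp.1 hp.2

/-- The summand of `cost`. -/
private def Fc (G : FuzzyGraph V) (P : Finpartition (univ : Finset V)) (p : V × V) : ℕ :=
  (if G.real p.1 p.2 ∧ ¬together P p.1 p.2 then unitW G p.1 p.2 else 0) +
  (if G.nonedge p.1 p.2 ∧ together P p.1 p.2 then unitW G p.1 p.2 else 0)

/-- A pair contributes to the cost. -/
private def Cond (G : FuzzyGraph V) (P : Finpartition (univ : Finset V)) (p : V × V) : Prop :=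
  (G.real p.1 p.2 = true ∧ ¬together P p.1 p.2) ∨ (G.nonedge p.1 p.2 ∧ together P p.1 p.2)

private instance {G : FuzzyGraph V} {P : Finpartition (univ : Finset V)} {p : V × V} :
    Decidable (Cond G P p) :=
  inferInstanceAs (Decidable ((G.real p.1 p.2 = true ∧ ¬together P p.1 p.2) ∨
    (G.nonedge p.1 p.2 ∧ together P p.1 p.2)))

private lemma cost_eq (G : FuzzyGraph V) (P : Finpartition (univ : Finset V)) :
    cost G (unitW G) P = (∑ p ∈ univ.offDiag, Fc G P p) / 2 := rfl

private lemma Fc_eq (G : FuzzyGraph V) (P : Finpartition (univ : Finset V)) (p : V × V) :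
    Fc G P p = if Cond G P p then 1 else 0 := by
  by_cases h1 : G.real p.1 p.2 = true ∧ ¬together P p.1 p.2
  · have hf : ¬ G.fuzzy p.1 p.2 = true := fun hf => G.not_real_and_fuzzy _ _ ⟨h1.1, hf⟩
    have h2 : ¬(G.nonedge p.1 p.2 ∧ together P p.1 p.2) := fun h => h.1.2.1 h1.1
    simp [Fc, Cond, h1, h2, unitW, hf]
  · by_cases h2 : G.nonedge p.1 p.2 ∧ together P p.1 p.2
    · simp [Fc, Cond, h1, h2, unitW, h2.1.2.2]
    · simp [Fc, Cond, h1, h2]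

private lemma Fc_ne_zero {G : FuzzyGraph V} {P : Finpartition (univ : Finset V)} {p : V × V} :
    Fc G P p ≠ 0 ↔ Cond G P p := by
  rw [Fc_eq]
  split_ifs with h <;> simp [h]

private lemma cost_le_cost {V₁ V₂ : Type*} [Fintype V₁] [DecidableEq V₁]
    [Fintype V₂] [DecidableEq V₂]
    (G₁ : FuzzyGraph V₁) (G₂ : FuzzyGraph V₂)
    (P₁ : Finpartition (univ : Finset V₁)) (P₂ : Finpartition (univ : Finset V₂))
    (i : V₁ × V₁ → V₂ × V₂)
    (h : ∀ p : V₁ × V₁, p.1 ≠ p.2 → Cond G₁ P₁ p →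
      ((i p).1 ≠ (i p).2 ∧ Cond G₂ P₂ (i p)))
    (hinj : ∀ p : V₁ × V₁, p.1 ≠ p.2 → Cond G₁ P₁ p →
      ∀ q : V₁ × V₁, q.1 ≠ q.2 → Cond G₁ P₁ q → i p = i q → p = q) :
    cost G₁ (unitW G₁) P₁ ≤ cost G₂ (unitW G₂) P₂ := by
  rw [cost_eq, cost_eq]
  refine Nat.div_le_div_right ?_
  refine sum_le_sum_inj _ _ i ?_ ?_ ?_
  · intro p hp hf
    rw [Finset.mem_offDiag] at hp
    rw [Finset.mem_offDiag]
    have := h p hp.2.2 (Fc_ne_zero.1 hf)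
    exact ⟨mem_univ _, mem_univ _, this.1⟩
  · intro p hp hf
    rw [Finset.mem_offDiag] at hp
    have := h p hp.2.2 (Fc_ne_zero.1 hf)
    rw [Fc_eq, Fc_eq, if_pos (Fc_ne_zero.1 hf), if_pos this.2]
  · intro p hp hf q hq hg hpq
    rw [Finset.mem_offDiag] at hp hq
    exact hinj p hp.2.2 (Fc_ne_zero.1 hf) q hq.2.2 (Fc_ne_zero.1 hg) hpq

private lemma out_spec {W : Type*} (e : Sym2 W) :
    s((Quot.out e).1, (Quot.out e).2) = e := by
  show Quot.mk (Sym2.Rel W) ((Quot.out e).1, (Quot.out e).2) = e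
  rw [Prod.mk.eta]
  exact Quot.out_eq e

private lemma realEdgeP_mk {W : Type*} {G : FuzzyGraph W} {u v : W}
    (h : G.real u v = true) : realEdgeP G s(u, v) := by
  show Sym2.lift ⟨G.real, G.real_symm⟩ s(u, v) = true
  rw [Sym2.lift_mk]
  exact h

private lemma realEdgeP_out {W : Type*} {G : FuzzyGraph W} {e : Sym2 W}
    (he : realEdgeP G e) : G.real (Quot.out e).1 (Quot.out e).2 = true := by
  have h : Sym2.lift ⟨G.real, G.real_symm⟩ e = true := he
  rw [← out_spec e, Sym2.lift_mk] at h
  exact h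

private lemma realEdgeP_out_ne {W : Type*} {G : FuzzyGraph W} {e : Sym2 W}
    (he : realEdgeP G e) : (Quot.out e).1 ≠ (Quot.out e).2 := by
  intro hcon
  have h := realEdgeP_out he
  rw [hcon, G.real_irrefl] at h
  exact Bool.noConfusion h

private lemma mem_out {W : Type*} (e : Sym2 W) (w : W) :
    w ∈ e ↔ w = (Quot.out e).1 ∨ w = (Quot.out e).2 := by
  conv_lhs => rw [← out_spec e]
  exact Sym2.mem_iff

private lemma out_cases {W : Type*} (u v : W) :
    Quot.out (s(u, v) : Sym2 W) = (u, v) ∨ Quot.out (s(u, v) : Sym2 W) = (v, u) := by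
  have h : s((Quot.out (s(u, v) : Sym2 W)).1, (Quot.out (s(u, v) : Sym2 W)).2) = s(u, v) := out_spec _
  rcases (Sym2.mk_eq_mk_iff (p := Quot.out (s(u, v) : Sym2 W)) (q := (u, v))).1 h with h' | h'
  · exact Or.inl h'
  · exact Or.inr h'

end Stmt16Aux

/-- Subdividing every real edge of a unit-weight fuzzy graph `G` (the former
real edge and all further new pairs become fuzzy, the nonedges are unchanged) yields an
equivalent instance. -/
theorem stmt16 {V : Type*} [Fintype V] [DecidableEq V]
    (G : FuzzyGraph V) (k : ℕ)
    (G' : FuzzyGraph (V ⊕ {e : Sym2 V // realEdgeP G e}))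
    (hreal : ∀ a b : V ⊕ {e : Sym2 V // realEdgeP G e}, G'.real a b ↔
      ∃ (u : V) (e : Sym2 V) (he : realEdgeP G e), u ∈ e ∧
        ((a = Sum.inl u ∧ b = Sum.inr ⟨e, he⟩) ∨ (b = Sum.inl u ∧ a = Sum.inr ⟨e, he⟩)))
    (hnon : ∀ a b : V ⊕ {e : Sym2 V // realEdgeP G e}, G'.nonedge a b ↔
      ∃ u v : V, G.nonedge u v ∧ a = Sum.inl u ∧ b = Sum.inl v) :
    (∃ 𝒞 : Finpartition (Finset.univ : Finset V), cost G (unitW G) 𝒞 ≤ k) ↔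
    (∃ 𝒞' : Finpartition (Finset.univ : Finset (V ⊕ {e : Sym2 V // realEdgeP G e})),
      cost G' (unitW G') 𝒞' ≤ k) := by
  classical
  -- Characterizations of real edges and nonedges of `G'`.
  have real_ll : ∀ u v : V, ¬ G'.real (Sum.inl u) (Sum.inl v) := by
    intro u v h
    rw [hreal] at h
    obtain ⟨u', e', he', -, ⟨h1, h2⟩ | ⟨h1, h2⟩⟩ := h <;> simp at h2
  have real_rr : ∀ ee ff : {e : Sym2 V // realEdgeP G e},
      ¬ G'.real (Sum.inr ee) (Sum.inr ff) := by
    intro ee ff h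
    rw [hreal] at h
    obtain ⟨u', e', he', -, ⟨h1, h2⟩ | ⟨h1, h2⟩⟩ := h <;> simp at h1
  have real_lr : ∀ (u : V) (ee : {e : Sym2 V // realEdgeP G e}),
      G'.real (Sum.inl u) (Sum.inr ee) ↔ u ∈ ee.1 := by
    intro u ee
    rw [hreal]
    constructor
    · rintro ⟨u', e', he', hm, ⟨h1, h2⟩ | ⟨h1, h2⟩⟩
      · rw [Sum.inl.injEq] at h1
        rw [Sum.inr.injEq] at h2
        subst h1
        rw [h2]
        exact hm
      · simp at h1
    · intro hm
      exact ⟨u, ee.1, ee.2, hm, Or.inl ⟨rfl, rfl⟩⟩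
  have real_rl : ∀ (u : V) (ee : {e : Sym2 V // realEdgeP G e}),
      G'.real (Sum.inr ee) (Sum.inl u) ↔ u ∈ ee.1 := by
    intro u ee
    rw [hreal]
    constructor
    · rintro ⟨u', e', he', hm, ⟨h1, h2⟩ | ⟨h1, h2⟩⟩
      · simp at h1
      · rw [Sum.inl.injEq] at h1
        rw [Sum.inr.injEq] at h2
        subst h1
        rw [h2]
        exact hm
    · intro hm
      exact ⟨u, ee.1, ee.2, hm, Or.inr ⟨rfl, rfl⟩⟩
  have non_ll : ∀ u v : V, G'.nonedge (Sum.inl u) (Sum.inl v) ↔ G.nonedge u v := by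
    intro u v
    rw [hnon]
    constructor
    · rintro ⟨u', v', h, h1, h2⟩
      rw [Sum.inl.injEq] at h1 h2
      subst h1; subst h2
      exact h
    · intro h
      exact ⟨u, v, h, rfl, rfl⟩
  have non_shape : ∀ a b : V ⊕ {e : Sym2 V // realEdgeP G e}, G'.nonedge a b →
      ∃ u v : V, a = Sum.inl u ∧ b = Sum.inl v := by
    intro a b h
    rw [hnon] at h
    obtain ⟨u, v, -, h1, h2⟩ := h
    exact ⟨u, v, h1, h2⟩
  constructor
  · -- forward direction
    rintro ⟨P, hP⟩
    let g : (V ⊕ {e : Sym2 V // realEdgeP G e}) → V :=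
      Sum.elim id (fun ee => (Quot.out ee.1).1)
    let s0 : Setoid (V ⊕ {e : Sym2 V // realEdgeP G e}) :=
      ⟨fun a b => together P (g a) (g b),
        ⟨fun a => together_refl P (g a), fun h => together_symm h,
          fun h h' => together_trans h h'⟩⟩
    haveI hdec : DecidableRel s0.r :=
      fun a b => inferInstanceAs (Decidable (together P (g a) (g b)))
    have htog : ∀ a b, together (Finpartition.ofSetoid s0) a b ↔ together P (g a) (g b) :=
      fun a b => together_ofSetoid s0 a b
    refine ⟨Finpartition.ofSetoid s0, le_trans ?_ hP⟩
    have hsupp : ∀ q : (V ⊕ {e : Sym2 V // realEdgeP G e}) × (V ⊕ {e : Sym2 V // realEdgeP G e}),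
        q.1 ≠ q.2 → Cond G' (Finpartition.ofSetoid s0) q →
        (∃ u v : V, q = (Sum.inl u, Sum.inl v) ∧ G.nonedge u v ∧ together P u v) ∨
        (∃ ee : {e : Sym2 V // realEdgeP G e},
          q = (Sum.inl (Quot.out ee.1).2, Sum.inr ee) ∧
            ¬ together P (Quot.out ee.1).2 (Quot.out ee.1).1) ∨
        (∃ ee : {e : Sym2 V // realEdgeP G e},
          q = (Sum.inr ee, Sum.inl (Quot.out ee.1).2) ∧
            ¬ together P (Quot.out ee.1).1 (Quot.out ee.1).2) := by
      rintro ⟨a, b⟩ hne hc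
      rcases hc with ⟨hr, hnt⟩ | ⟨hno, ht⟩
      · rw [htog] at hnt
        match a, b with
        | Sum.inl u, Sum.inl v => exact absurd hr (real_ll u v)
        | Sum.inl u, Sum.inr ee =>
          refine Or.inr (Or.inl ⟨ee, ?_, ?_⟩)
          · have hm : u ∈ ee.1 := (real_lr u ee).1 hr
            rcases (mem_out ee.1 u).1 hm with h | h
            · exfalso
              apply hnt
              simp only [g, Sum.elim_inl, Sum.elim_inr, h]
              exact together_refl P _
            · rw [h]
          · intro hcon
            apply hnt
            have hm : u ∈ ee.1 := (real_lr u ee).1 hr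
            rcases (mem_out ee.1 u).1 hm with h | h
            · simp only [g, Sum.elim_inl, Sum.elim_inr, h]
              exact together_refl P _
            · simp only [g, Sum.elim_inl, Sum.elim_inr, h]
              exact hcon
        | Sum.inr ee, Sum.inl u =>
          refine Or.inr (Or.inr ⟨ee, ?_, ?_⟩)
          · have hm : u ∈ ee.1 := (real_rl u ee).1 hr
            rcases (mem_out ee.1 u).1 hm with h | h
            · exfalso
              apply hnt
              simp only [g, Sum.elim_inl, Sum.elim_inr, h]
              exact together_refl P _
            · rw [h]
          · intro hcon
            apply hnt
            have hm : u ∈ ee.1 := (real_rl u ee).1 hr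
            rcases (mem_out ee.1 u).1 hm with h | h
            · simp only [g, Sum.elim_inl, Sum.elim_inr, h]
              exact together_refl P _
            · simp only [g, Sum.elim_inl, Sum.elim_inr, h]
              exact hcon
        | Sum.inr ee, Sum.inr ff => exact absurd hr (real_rr ee ff)
      · obtain ⟨u, v, ha, hb⟩ := non_shape a b hno
        subst ha; subst hb
        rw [htog] at ht
        simp only [g, Sum.elim_inl] at ht
        exact Or.inl ⟨u, v, rfl, (non_ll u v).1 hno, ht⟩
    refine cost_le_cost G' G (Finpartition.ofSetoid s0) P (fun q => (g q.1, g q.2)) ?_ ?_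
    · intro q hq hc
      rcases hsupp q hq hc with ⟨u, v, rfl, hno, ht⟩ | ⟨ee, rfl, hnt⟩ | ⟨ee, rfl, hnt⟩
      · exact ⟨hno.1, Or.inr ⟨hno, ht⟩⟩
      · refine ⟨(realEdgeP_out_ne ee.2).symm, Or.inl ⟨?_, hnt⟩⟩
        rw [G.real_symm]
        exact realEdgeP_out ee.2
      · exact ⟨realEdgeP_out_ne ee.2, Or.inl ⟨realEdgeP_out ee.2, hnt⟩⟩
    · intro p hp hcp q hq hcq heq
      rcases hsupp p hp hcp with ⟨u, v, rfl, hno, -⟩ | ⟨ee, rfl, -⟩ | ⟨ee, rfl, -⟩ <;>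
        rcases hsupp q hq hcq with ⟨u', v', rfl, hno', -⟩ | ⟨ff, rfl, -⟩ | ⟨ff, rfl, -⟩ <;>
          simp only [g, Sum.elim_inl, Sum.elim_inr, Prod.mk.injEq, id_eq] at heq
      · rw [heq.1, heq.2]
      · exfalso
        apply hno.2.1
        rw [heq.1, heq.2, G.real_symm]
        exact realEdgeP_out ff.2
      · exfalso
        apply hno.2.1
        rw [heq.1, heq.2]
        exact realEdgeP_out ff.2
      · exfalso
        apply hno'.2.1
        rw [← heq.1, ← heq.2, G.real_symm]
        exact realEdgeP_out ee.2
      · have hee : ee = ff := by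
          refine Subtype.ext ?_
          rw [← out_spec ee.1, ← out_spec ff.1, heq.1, heq.2]
        rw [hee]
      · exfalso
        have hee : ee = ff := by
          refine Subtype.ext ?_
          rw [← out_spec ee.1, ← out_spec ff.1, ← heq.1, ← heq.2]
          exact Sym2.eq_swap
        cases hee
        exact realEdgeP_out_ne ee.2 heq.2
      · exfalso
        apply hno'.2.1
        rw [← heq.1, ← heq.2]
        exact realEdgeP_out ee.2
      · exfalso
        have hee : ee = ff := by
          refine Subtype.ext ?_
          rw [← out_spec ee.1, ← out_spec ff.1, heq.1, heq.2]
          exact (Sym2.mk_eq_mk_iff.2 (Or.inr rfl))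
        cases hee
        exact realEdgeP_out_ne ee.2 heq.1
      · have hee : ee = ff := by
          refine Subtype.ext ?_
          rw [← out_spec ee.1, ← out_spec ff.1, heq.1, heq.2]
        rw [hee]
  · -- backward direction
    rintro ⟨P', hP'⟩
    let s0 : Setoid V :=
      ⟨fun u v => together P' (Sum.inl u) (Sum.inl v),
        ⟨fun u => together_refl P' _, fun h => together_symm h,
          fun h h' => together_trans h h'⟩⟩
    haveI hdec : DecidableRel s0.r :=
      fun a b => inferInstanceAs (Decidable (together P' (Sum.inl a) (Sum.inl b)))
    have htog : ∀ u v, together (Finpartition.ofSetoid s0) u v ↔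
        together P' (Sum.inl u) (Sum.inl v) :=
      fun u v => together_ofSetoid s0 u v
    refine ⟨Finpartition.ofSetoid s0, le_trans ?_ hP'⟩
    -- chosen endpoint of an edge, separated from the subdivision vertex whenever
    -- the edge endpoints are separated
    let wsel : {e : Sym2 V // realEdgeP G e} → V := fun ee =>
      if together P' (Sum.inl (Quot.out ee.1).1) (Sum.inr ee) then (Quot.out ee.1).2
      else (Quot.out ee.1).1
    have hwsel : ∀ ee : {e : Sym2 V // realEdgeP G e},
        ¬ together P' (Sum.inl (Quot.out ee.1).1) (Sum.inl (Quot.out ee.1).2) →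
        (wsel ee ∈ ee.1 ∧ ¬ together P' (Sum.inl (wsel ee)) (Sum.inr ee)) := by
      intro ee hcut
      by_cases hca : together P' (Sum.inl (Quot.out ee.1).1) (Sum.inr ee)
      · simp only [wsel, if_pos hca]
        exact ⟨(mem_out ee.1 _).2 (Or.inr rfl),
          fun hcb => hcut (together_trans hca (together_symm hcb))⟩
      · simp only [wsel, if_neg hca]
        exact ⟨(mem_out ee.1 _).2 (Or.inl rfl), hca⟩
    let i : V × V → (V ⊕ {e : Sym2 V // realEdgeP G e}) × (V ⊕ {e : Sym2 V // realEdgeP G e}) :=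
      fun p =>
        if h : G.real p.1 p.2 = true then
          if (p.1, p.2) = Quot.out (s(p.1, p.2) : Sym2 V) then
            (Sum.inl (wsel ⟨s(p.1, p.2), realEdgeP_mk h⟩), Sum.inr ⟨s(p.1, p.2), realEdgeP_mk h⟩)
          else
            (Sum.inr ⟨s(p.1, p.2), realEdgeP_mk h⟩, Sum.inl (wsel ⟨s(p.1, p.2), realEdgeP_mk h⟩))
        else (Sum.inl p.1, Sum.inl p.2)
    have hcut_out : ∀ p : V × V, G.real p.1 p.2 = true →
        ¬ together P' (Sum.inl p.1) (Sum.inl p.2) →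
        ¬ together P' (Sum.inl (Quot.out (s(p.1, p.2) : Sym2 V)).1)
          (Sum.inl (Quot.out (s(p.1, p.2) : Sym2 V)).2) := by
      intro p hr hnt
      have hout := out_cases p.1 p.2
      rcases hout with h | h <;> rw [h]
      · exact hnt
      · exact fun hc => hnt (together_symm hc)
    refine cost_le_cost G G' (Finpartition.ofSetoid s0) P' i ?_ ?_
    · intro p hp hc
      rcases hc with ⟨hr, hnt⟩ | ⟨hno, ht⟩
      · rw [htog] at hnt
        have hcut := hcut_out p hr hnt
        obtain ⟨hmem, hsep⟩ := hwsel ⟨s(p.1, p.2), realEdgeP_mk hr⟩ hcut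
        by_cases hor : (p.1, p.2) = Quot.out (s(p.1, p.2) : Sym2 V)
        · simp only [i, dif_pos hr, if_pos hor]
          exact ⟨by simp, Or.inl ⟨(real_lr _ _).2 hmem, hsep⟩⟩
        · simp only [i, dif_pos hr, if_neg hor]
          exact ⟨by simp, Or.inl ⟨(real_rl _ _).2 hmem,
            fun hcon => hsep (together_symm hcon)⟩⟩
      · have hnr : ¬ G.real p.1 p.2 = true := hno.2.1
        rw [htog] at ht
        simp only [i, dif_neg hnr]
        exact ⟨by simpa using hp, Or.inr ⟨(non_ll _ _).2 hno, ht⟩⟩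
    · intro p hp hcp q hq hcq heq
      have hrp : Cond G (Finpartition.ofSetoid s0) p →
          (G.real p.1 p.2 = true) ∨ ¬ G.real p.1 p.2 = true := fun _ => em _
      by_cases h1 : G.real p.1 p.2 = true <;> by_cases h2 : G.real q.1 q.2 = true
      · -- both real
        simp only [i, dif_pos h1, dif_pos h2] at heq
        by_cases o1 : (p.1, p.2) = Quot.out (s(p.1, p.2) : Sym2 V) <;>
          by_cases o2 : (q.1, q.2) = Quot.out (s(q.1, q.2) : Sym2 V)
        · rw [if_pos o1, if_pos o2] at heq
          have he : (s(p.1, p.2) : Sym2 V) = s(q.1, q.2) := by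
            have := congrArg Prod.snd heq
            simpa using this
          have : (p.1, p.2) = (q.1, q.2) := by rw [o1, o2, he]
          rw [← Prod.mk.eta (p := p), ← Prod.mk.eta (p := q), this]
        · rw [if_pos o1, if_neg o2] at heq
          exfalso
          have := congrArg Prod.fst heq
          simp at this
        · rw [if_neg o1, if_pos o2] at heq
          exfalso
          have := congrArg Prod.fst heq
          simp at this
        · rw [if_neg o1, if_neg o2] at heq
          have he : (s(p.1, p.2) : Sym2 V) = s(q.1, q.2) := by
            have := congrArg Prod.fst heq
            simpa using this
          have houtp := out_cases p.1 p.2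
          have houtq := out_cases q.1 q.2
          rcases houtp with hop | hop
          · exact absurd hop.symm o1
          · rcases houtq with hoq | hoq
            · exact absurd hoq.symm o2
            · have : (p.2, p.1) = (q.2, q.1) := by rw [← hop, ← hoq, he]
              have h1' : p.1 = q.1 := by
                have := congrArg Prod.snd this
                simpa using this
              have h2' : p.2 = q.2 := by
                have := congrArg Prod.fst this
                simpa using this
              rw [← Prod.mk.eta (p := p), ← Prod.mk.eta (p := q), h1', h2']
      · -- p real, q nonedge : shapes differ
        exfalso
        simp only [i, dif_pos h1, dif_neg h2] at heq
        by_cases o1 : (p.1, p.2) = Quot.out (s(p.1, p.2) : Sym2 V)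
        · rw [if_pos o1] at heq
          have := congrArg Prod.snd heq
          simp at this
        · rw [if_neg o1] at heq
          have := congrArg Prod.fst heq
          simp at this
      · exfalso
        simp only [i, dif_neg h1, dif_pos h2] at heq
        by_cases o2 : (q.1, q.2) = Quot.out (s(q.1, q.2) : Sym2 V)
        · rw [if_pos o2] at heq
          have := congrArg Prod.snd heq
          simp at this
        · rw [if_neg o2] at heq
          have := congrArg Prod.fst heq
          simp at this
      · -- both nonedge
        simp only [i, dif_neg h1, dif_neg h2, Prod.mk.injEq, Sum.inl.injEq] at heq
        rw [← Prod.mk.eta (p := p), ← Prod.mk.eta (p := q), heq.1, heq.2]
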